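/- For every a > 0, the limit of β₁(a,b) as b → 0⁺ exists and equals (π²/24)·a; in particular β₁ extends continuously to the boundary with β₁(a,0) = (1/4)·(π²/6)·a. -/

import Mathlib

open Real Filter MeasureTheory Set Topology

/-- The logarithmic mean `Λ(s,t)`. -/
noncomputable def logMean (s t : ℝ) : ℝ :=
  if s = t then s else (s - t) / (Real.log s - Real.log t)

/-- The harmonic-logarithmic mean `Λ_H(s,t) = st/Λ(s,t)`. -/
noncomputable def harmLogMean (s t : ℝ) : ℝ := s * t / logMean s t

/-- `α*₁(a,b,ξ) = ∫₀^ξ sinh(x) Λ_H(a e^{-x}, b e^{x}) dx`. -/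
noncomputable def alphaOne (a b ξ : ℝ) : ℝ :=
  ∫ x in (0:ℝ)..ξ, Real.sinh x * harmLogMean (a * Real.exp (-x)) (b * Real.exp x)

/-- `β₁(a,b) = α*₁(a, b, (1/2) log(a/b))`. -/
noncomputable def betaOne (a b : ℝ) : ℝ :=
  alphaOne a b ((1 / 2) * Real.log (a / b))

noncomputable def gAux (y : ℝ) : ℝ := 2 * y / (Real.exp (2 * y) - 1)

lemma exp_two_mul_sub_one_pos {y : ℝ} (hy : 0 < y) : 0 < Real.exp (2 * y) - 1 := by
  have := Real.exp_lt_exp.mpr (show (0:ℝ) < 2 * y by linarith)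
  simpa [Real.exp_zero] using this

lemma gAux_nonneg {y : ℝ} (hy : 0 < y) : 0 ≤ gAux y :=
  div_nonneg (by linarith) (exp_two_mul_sub_one_pos hy).le

lemma gAux_le {y : ℝ} (hy : 0 < y) : gAux y ≤ 2 * Real.exp (-y) := by
  have hE : 0 < Real.exp y := Real.exp_pos y
  have key : y * Real.exp y ≤ Real.exp (2 * y) - 1 := by
    have h2 : Real.exp (2 * y) = Real.exp y * Real.exp y := by
      rw [two_mul, Real.exp_add]
    nlinarith [Real.add_one_le_exp y, Real.exp_pos y]
  have hpos := exp_two_mul_sub_one_pos hy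
  have hyE : 0 < y * Real.exp y := by positivity
  calc gAux y = 2 * y / (Real.exp (2*y) - 1) := rfl
    _ ≤ 2 * y / (y * Real.exp y) := by
        apply div_le_div_of_nonneg_left (by linarith) hyE key
    _ = 2 * Real.exp (-y) := by
        rw [Real.exp_neg]; field_simp

lemma gAux_continuousOn : ContinuousOn gAux (Ioi 0) := by
  apply ContinuousOn.div (by fun_prop) (by fun_prop)
  intro y hy
  exact (exp_two_mul_sub_one_pos hy).ne'

lemma gAux_integrableOn : IntegrableOn gAux (Ioi 0) := by
  have hm : AEStronglyMeasurable gAux (volume.restrict (Ioi 0)) :=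
    gAux_continuousOn.aestronglyMeasurable measurableSet_Ioi
  have hb : IntegrableOn (fun x : ℝ => 2 * Real.exp (-x)) (Ioi 0) := by
    have := (exp_neg_integrableOn_Ioi 0 one_pos).const_mul 2
    exact IntegrableOn.congr_fun this (fun x _ => by ring_nf) measurableSet_Ioi
  refine Integrable.mono' hb hm ?_
  · rw [ae_restrict_iff' measurableSet_Ioi]
    filter_upwards with y hy
    rw [Real.norm_eq_abs, abs_of_nonneg (gAux_nonneg hy)]
    exact gAux_le hy

lemma aux_integrable (c : ℝ) (hc : 0 < c) :
    IntegrableOn (fun y => y * Real.exp (-(c * y))) (Ioi 0) := by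
  have h := Real.GammaIntegral_convergent (show (0:ℝ) < 2 by norm_num)
  have h2 : IntegrableOn (fun x : ℝ => Real.exp (-(c * x)) * (c * x) ^ ((2:ℝ) - 1)) (Ioi 0) := by
    have := (integrableOn_Ioi_comp_mul_left_iff
      (fun x : ℝ => Real.exp (-x) * x ^ ((2:ℝ) - 1)) 0 hc).mpr (by simpa using h)
    simpa using this
  refine IntegrableOn.congr_fun (h2.const_mul (1/c)) (fun x hx => ?_) measurableSet_Ioi
  have hx0 : (0:ℝ) < x := hx
  rw [show ((2:ℝ) - 1) = 1 by norm_num, Real.rpow_one]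
  field_simp

lemma aux_integral (c : ℝ) (hc : 0 < c) :
    ∫ y in Ioi 0, y * Real.exp (-(c * y)) = 1 / c ^ 2 := by
  have h := Real.integral_rpow_mul_exp_neg_mul_Ioi (show (0:ℝ) < 2 by norm_num) hc
  rw [Real.Gamma_two, mul_one] at h
  have h2 : ∫ t in Ioi 0, t ^ ((2:ℝ) - 1) * Real.exp (-(c * t))
      = ∫ t in Ioi 0, t * Real.exp (-(c * t)) := by
    refine setIntegral_congr_fun measurableSet_Ioi (fun t ht => ?_)
    rw [show ((2:ℝ) - 1) = 1 by norm_num, Real.rpow_one]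
  rw [h2] at h
  rw [h, show (2:ℝ) = ((2:ℕ):ℝ) by norm_num, Real.rpow_natCast, div_pow, one_pow]

lemma gAux_hasSum {y : ℝ} (hy : 0 < y) :
    HasSum (fun n : ℕ => 2 * y * Real.exp (-((2 * (n + 1)) * y))) (gAux y) := by
  have hr0 : 0 ≤ Real.exp (-(2 * y)) := (Real.exp_pos _).le
  have hr1 : Real.exp (-(2 * y)) < 1 := by
    rw [Real.exp_lt_one_iff]; linarith
  have h := (hasSum_geometric_of_lt_one hr0 hr1).mul_left (2 * y * Real.exp (-(2 * y)))
  have heq : ∀ n : ℕ, 2 * y * Real.exp (-(2 * y)) * Real.exp (-(2 * y)) ^ n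
      = 2 * y * Real.exp (-((2 * (n + 1)) * y)) := by
    intro n
    rw [← Real.exp_nat_mul]
    rw [mul_assoc, ← Real.exp_add]
    ring_nf
  rw [funext heq] at h
  convert h using 1
  · rfl
  have hE : Real.exp (2 * y) - 1 ≠ 0 := (exp_two_mul_sub_one_pos hy).ne'
  have hEE : Real.exp (-(2*y)) = (Real.exp (2*y))⁻¹ := Real.exp_neg _
  have h1 : (1 : ℝ) - Real.exp (-(2*y)) ≠ 0 := by
    intro hcon
    apply hE
    rw [hEE] at hcon
    have := Real.exp_pos (2*y)
    field_simp at hcon ⊢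
    linarith
  unfold gAux
  rw [hEE] at h1 ⊢
  have hp := Real.exp_pos (2*y)
  field_simp

lemma hzeta_shift : HasSum (fun n : ℕ => 1/2 * (1 / ((n:ℝ)+1) ^ 2)) (π ^ 2 / 12) := by
  have h2 : HasSum (fun n : ℕ => (1:ℝ) / ((n:ℝ)+1) ^ 2) (π ^ 2 / 6) := by
    have h3 := (hasSum_nat_add_iff' (f := fun n : ℕ => (1:ℝ) / (n:ℝ) ^ 2)
      (g := π ^ 2 / 6) 1).mpr hasSum_zeta_two
    simpa using h3
  have h4 := h2.mul_left (1/2)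
  rw [show (π:ℝ) ^ 2 / 12 = 1/2 * (π ^ 2 / 6) by ring]
  exact h4

lemma gAux_integral : ∫ y in Ioi 0, gAux y = π ^ 2 / 12 := by
  set F : ℕ → ℝ → ℝ := fun n y => 2 * y * Real.exp (-((2 * (n + 1)) * y)) with hF
  have hc : ∀ n : ℕ, (0:ℝ) < 2 * (n + 1) := fun n => by positivity
  have hF_int : ∀ n : ℕ, Integrable (F n) (volume.restrict (Ioi 0)) := by
    intro n
    have := (aux_integrable (2 * (n+1)) (hc n)).const_mul 2
    exact IntegrableOn.congr_fun this (fun x _ => by simp [hF]; ring) measurableSet_Ioi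
  have hF_val : ∀ n : ℕ, ∫ y in Ioi 0, F n y = 1/2 * (1 / ((n:ℝ)+1) ^ 2) := by
    intro n
    have h1 : ∫ y in Ioi 0, F n y = 2 * ∫ y in Ioi 0, y * Real.exp (-((2 * (n + 1)) * y)) := by
      rw [← integral_const_mul]
      exact setIntegral_congr_fun measurableSet_Ioi (fun y _ => by simp [hF]; ring)
    rw [h1, aux_integral _ (hc n)]
    have : ((n:ℝ)+1) ≠ 0 := by positivity
    field_simp
  have hF_nonneg : ∀ n : ℕ, ∀ y ∈ Ioi (0:ℝ), 0 ≤ F n y := by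
    intro n y hy
    have : (0:ℝ) < y := hy
    positivity
  have h_norm : ∀ n : ℕ, ∫ y in Ioi 0, ‖F n y‖ = 1/2 * (1 / ((n:ℝ)+1) ^ 2) := by
    intro n
    rw [← hF_val n]
    refine setIntegral_congr_fun measurableSet_Ioi (fun y hy => ?_)
    rw [Real.norm_eq_abs, abs_of_nonneg (hF_nonneg n y hy)]
  have hsummable : Summable (fun n : ℕ => ∫ y in Ioi 0, ‖F n y‖) := by
    rw [funext h_norm]
    exact hzeta_shift.summable
  have hsum := hasSum_integral_of_summable_integral_norm hF_int hsummable
  have heq : ∫ y in Ioi 0, (∑' n, F n y) = ∫ y in Ioi 0, gAux y := by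
    refine setIntegral_congr_fun measurableSet_Ioi (fun y hy => ?_)
    exact (gAux_hasSum hy).tsum_eq
  rw [heq] at hsum
  have hfin := hsum.unique (by
    rw [show (fun n => ∫ y in Ioi 0, F n y) = (fun n : ℕ => 1/2 * (1 / ((n:ℝ)+1) ^ 2))
      from funext hF_val]
    exact hzeta_shift)
  linarith [hfin]

open intervalIntegral in
lemma integral_id' (u v : ℝ) : ∫ x in u..v, x = (v ^ 2 - u ^ 2) / 2 := integral_id

section Main
variable {a b : ℝ}

lemma sqrt_exp_xi (ha : 0 < a) (hb : 0 < b) :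
    Real.sqrt (a * b) * Real.exp ((1/2) * Real.log (a/b)) = a ∧
    Real.sqrt (a * b) * Real.exp (-((1/2) * Real.log (a/b))) = b := by
  set ξ := (1/2) * Real.log (a/b) with hξ
  have h2ξ : Real.exp ξ ^ 2 = a / b := by
    rw [← Real.exp_nat_mul]
    norm_num
    rw [show (2:ℝ) * ξ = Real.log (a/b) by rw [hξ]; ring, Real.exp_log (div_pos ha hb)]
  have hsq : Real.exp ξ = Real.sqrt (a/b) := by
    rw [← Real.sqrt_sq (Real.exp_pos ξ).le, h2ξ]
  constructor
  · rw [hsq, ← Real.sqrt_mul (by positivity) _, show a * b * (a/b) = a^2 by field_simp,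
      Real.sqrt_sq ha.le]
  · rw [Real.exp_neg, hsq, ← Real.sqrt_inv, ← Real.sqrt_mul (by positivity),
      show a * b * (a/b)⁻¹ = b^2 by field_simp, Real.sqrt_sq hb.le]

lemma betaOne_eq (ha : 0 < a) (hb : 0 < b) (hba : b < a) :
    betaOne a b = (a - b)/2 * (∫ y in (0:ℝ)..((1/2) * Real.log (a/b)), gAux y)
      - b * ((1/2) * Real.log (a/b)) ^ 2 / 2 := by
  set ξ := (1/2) * Real.log (a/b) with hξdef
  have hab1 : 1 < a / b := (one_lt_div hb).mpr hba
  have hξpos : 0 < ξ := by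
    have := Real.log_pos hab1
    rw [hξdef]; linarith
  set c := Real.sqrt (a * b) with hcdef
  have hcpos : 0 < c := Real.sqrt_pos.mpr (by positivity)
  have hc2 : c ^ 2 = a * b := Real.sq_sqrt (by positivity)
  obtain ⟨hca, hcb⟩ := sqrt_exp_xi ha hb
  -- Φ
  set Φ : ℝ → ℝ := fun y => c * Real.sinh (ξ - y) * y / Real.sinh y with hΦ
  have step1 : betaOne a b = ∫ x in (0:ℝ)..ξ, Φ (ξ - x) := by
    unfold betaOne alphaOne
    rw [← hξdef]
    apply intervalIntegral.integral_congr_ae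
    have hne : ∀ᵐ x : ℝ, x ≠ ξ := by
      rw [ae_iff]
      have hset : {x : ℝ | ¬ x ≠ ξ} = {ξ} := by ext x; simp
      rw [hset]
      exact measure_singleton ξ
    filter_upwards [hne] with x hxne hx
    rw [Set.uIoc_of_le hξpos.le] at hx
    have hx0 : 0 < x := hx.1
    have hxξ : x < ξ := lt_of_le_of_ne hx.2 hxne
    -- the two sides
    have hs : a * Real.exp (-x) = c * Real.exp (ξ - x) := by
      rw [show ξ - x = ξ + (-x) by ring, Real.exp_add, ← mul_assoc, hca]
    have ht : b * Real.exp x = c * Real.exp (-(ξ - x)) := by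
      rw [show -(ξ - x) = -ξ + x by ring, Real.exp_add, ← mul_assoc, hcb]
    have hsinh_pos : 0 < Real.sinh (ξ - x) := Real.sinh_pos_iff.mpr (by linarith)
    have hdiff : a * Real.exp (-x) - b * Real.exp x = 2 * c * Real.sinh (ξ - x) := by
      rw [hs, ht, Real.sinh_eq]; ring
    have hst : a * Real.exp (-x) ≠ b * Real.exp x := by
      intro hcon
      have : 2 * c * Real.sinh (ξ - x) = 0 := by rw [← hdiff, hcon]; ring
      nlinarith
    have hlog : Real.log (a * Real.exp (-x)) - Real.log (b * Real.exp x) = 2 * (ξ - x) := by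
      rw [Real.log_mul ha.ne' (Real.exp_ne_zero _), Real.log_mul hb.ne' (Real.exp_ne_zero _),
        Real.log_exp, Real.log_exp, show (2:ℝ) * (ξ - x) = 2 * ξ - 2 * x by ring,
        show (2:ℝ) * ξ = Real.log (a/b) by rw [hξdef]; ring, Real.log_div ha.ne' hb.ne']
      ring
    have hprod : (a * Real.exp (-x)) * (b * Real.exp x) = a * b := by
      rw [show a * Real.exp (-x) * (b * Real.exp x) = a * b * (Real.exp (-x) * Real.exp x) by ring,
        ← Real.exp_add]
      simp
    unfold harmLogMean logMean
    rw [if_neg hst, hlog, hprod, hdiff, hΦ]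
    dsimp only
    rw [show ξ - (ξ - x) = x by ring]
    have hc2' : a * b = c * c := by rw [← hc2]; ring
    rw [hc2']
    have hsne : Real.sinh (ξ - x) ≠ 0 := hsinh_pos.ne'
    have hxd : ξ - x ≠ 0 := by intro h; apply hxne; linarith
    field_simp
  have h1 : c * Real.exp ξ = a := by rw [hξdef]; exact hca
  have h2 : c * Real.exp (-ξ) = b := by rw [hξdef]; exact hcb
  have hsinhξ : c * Real.sinh ξ = (a - b)/2 := by
    rw [Real.sinh_eq, show c * ((Real.exp ξ - Real.exp (-ξ))/2)
      = (c * Real.exp ξ - c * Real.exp (-ξ))/2 by ring, h1, h2]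
  have hcoshξ : c * Real.cosh ξ = (a + b)/2 := by
    rw [Real.cosh_eq, show c * ((Real.exp ξ + Real.exp (-ξ))/2)
      = (c * Real.exp ξ + c * Real.exp (-ξ))/2 by ring, h1, h2]
  have step2 : ∫ x in (0:ℝ)..ξ, Φ (ξ - x) = ∫ y in (0:ℝ)..ξ, Φ y := by
    rw [intervalIntegral.integral_comp_sub_left Φ ξ]
    norm_num
  have step3 : ∫ y in (0:ℝ)..ξ, Φ y
      = ∫ y in (0:ℝ)..ξ, ((a - b)/2 * gAux y - b * y) := by
    apply intervalIntegral.integral_congr_ae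
    filter_upwards with y hy
    rw [Set.uIoc_of_le hξpos.le] at hy
    have hy0 : 0 < y := hy.1
    have hsy : 0 < Real.sinh y := Real.sinh_pos_iff.mpr hy0
    have expand : Φ y = (c * Real.sinh ξ) * (y * Real.cosh y / Real.sinh y)
        - (c * Real.cosh ξ) * y := by
      rw [hΦ]; dsimp only
      rw [Real.sinh_sub]
      field_simp
    have key : y * Real.cosh y / Real.sinh y = y + gAux y := by
      unfold gAux
      have hE : 0 < Real.exp y := Real.exp_pos y
      have hE1 : 1 < Real.exp y := by
        rw [← Real.exp_zero]; exact Real.exp_lt_exp.mpr hy0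
      have h2y : Real.exp (2 * y) = Real.exp y * Real.exp y := by
        rw [two_mul, Real.exp_add]
      have hsyne : Real.sinh y ≠ 0 := hsy.ne'
      have hD : Real.exp (2 * y) - 1 ≠ 0 := (exp_two_mul_sub_one_pos hy0).ne'
      rw [Real.cosh_eq, Real.sinh_eq, Real.exp_neg, h2y]
      rw [Real.sinh_eq, Real.exp_neg] at hsyne
      rw [h2y] at hD
      field_simp
      have hD2 : Real.exp y ^ 2 - 1 ≠ 0 := by rw [sq]; exact hD
      rw [one_add_div hD2]; ring
    rw [expand, hsinhξ, hcoshξ, key]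
    ring
  have hgi : IntervalIntegrable gAux volume 0 ξ := by
    rw [intervalIntegrable_iff, Set.uIoc_of_le hξpos.le]
    exact gAux_integrableOn.mono_set Set.Ioc_subset_Ioi_self
  have hid : IntervalIntegrable (fun y : ℝ => b * y) volume 0 ξ :=
    (continuous_const.mul continuous_id).intervalIntegrable 0 ξ
  have step4 : ∫ y in (0:ℝ)..ξ, ((a - b)/2 * gAux y - b * y)
      = (a - b)/2 * (∫ y in (0:ℝ)..ξ, gAux y) - b * ξ ^ 2 / 2 := by
    rw [intervalIntegral.integral_sub (hgi.const_mul _) hid,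
      intervalIntegral.integral_const_mul, intervalIntegral.integral_const_mul,
      integral_id']
    ring
  rw [step1, step2, step3, step4]

end Main


/-- As `b → 0⁺`, `β₁(a,b) → (π²/24) a = (1/4)(π²/6) a`. -/
theorem betaOne_tendsto_boundary (a : ℝ) (ha : 0 < a) :
    Tendsto (fun b : ℝ => betaOne a b) (nhdsWithin 0 (Set.Ioi 0))
      (nhds (Real.pi ^ 2 / 24 * a)) ∧
    Real.pi ^ 2 / 24 * a = 1 / 4 * (Real.pi ^ 2 / 6) * a := by
  refine ⟨?_, by ring⟩
  set ξ : ℝ → ℝ := fun b => (1/2) * Real.log (a / b) with hξ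
  have hlogtend : Tendsto (fun b : ℝ => Real.log b) (nhdsWithin 0 (Set.Ioi 0)) atBot :=
    Real.tendsto_log_nhdsGT_zero
  have hneglog : Tendsto (fun b : ℝ => -Real.log b) (nhdsWithin 0 (Set.Ioi 0)) atTop :=
    tendsto_neg_atBot_atTop.comp hlogtend
  have hξtend : Tendsto ξ (nhdsWithin 0 (Set.Ioi 0)) atTop := by
    have h1 : Tendsto (fun b : ℝ => Real.log a + -Real.log b)
        (nhdsWithin 0 (Set.Ioi 0)) atTop :=
      tendsto_atTop_add_const_left _ (Real.log a) hneglog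
    have h2 := h1.const_mul_atTop (show (0:ℝ) < 1/2 by norm_num)
    apply h2.congr'
    filter_upwards [self_mem_nhdsWithin] with b hb
    have hb0 : 0 < b := hb
    rw [hξ]
    dsimp only
    rw [Real.log_div ha.ne' hb0.ne']
    ring
  have hInt : Tendsto (fun b => ∫ y in (0:ℝ)..ξ b, gAux y)
      (nhdsWithin 0 (Set.Ioi 0)) (𝓝 (π ^ 2 / 12)) := by
    have := MeasureTheory.intervalIntegral_tendsto_integral_Ioi 0 gAux_integrableOn hξtend
    rwa [gAux_integral] at this
  have hcoef : Tendsto (fun b : ℝ => (a - b)/2) (nhdsWithin 0 (Set.Ioi 0)) (𝓝 (a/2)) := by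
    have hc : Continuous fun b : ℝ => (a - b)/2 := by continuity
    have h := hc.tendsto 0
    simpa using h.mono_left nhdsWithin_le_nhds
  have hT3 : Tendsto (fun b : ℝ => b * ξ b ^ 2 / 2) (nhdsWithin 0 (Set.Ioi 0)) (𝓝 0) := by
    have hψ : Tendsto (fun t : ℝ => t ^ 2 * Real.exp (-t)) atTop (𝓝 0) :=
      tendsto_pow_mul_exp_neg_atTop_nhds_zero 2
    have hshift : Tendsto (fun t : ℝ => (t + Real.log a) ^ 2 * Real.exp (-(t + Real.log a)))
        atTop (𝓝 0) := hψ.comp (tendsto_atTop_add_const_right atTop (Real.log a) tendsto_id)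
    have h0 := hshift.mul_const (Real.exp (Real.log a) / 8)
    rw [zero_mul] at h0
    have hcomp := h0.comp hneglog
    apply hcomp.congr'
    filter_upwards [self_mem_nhdsWithin] with b hb
    simp only [Function.comp_apply]
    have hb0 : 0 < b := hb
    rw [hξ]
    dsimp only
    rw [Real.log_div ha.ne' hb0.ne',
      show -(-Real.log b + Real.log a) = Real.log b + -Real.log a by ring,
      Real.exp_add, Real.exp_neg, Real.exp_log hb0]
    have := Real.exp_ne_zero (Real.log a)
    field_simp
    ring
  have hmain := (hcoef.mul hInt).sub hT3
  rw [sub_zero] at hmain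
  have hv : Real.pi ^ 2 / 24 * a = a/2 * (π ^ 2 / 12) := by ring
  rw [hv]
  apply hmain.congr'
  filter_upwards [Ioo_mem_nhdsGT_of_mem (Set.left_mem_Ico.mpr ha)] with b hb
  exact (betaOne_eq ha hb.1 hb.2).symm
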